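/- Fix γ > 0, ω ∈ ℝ with ω ≠ 0, and r > γ, and for λ > 0 define D(ω, r, λ) := (1/λ²)·(sinh(ωλ) + e^{−ωλ}·(1 − γ/r)·(1 − e^{ωλ} − (γ/r)·log((e^{ωλ}·r − γ)/(r − γ)))), with log the real logarithm. Then the limit as λ → 0⁺ of (2·D(ω, r, λ)·(1 − γ/r)/ω² − 1)/λ equals −(2/3)·ω·(γ/r)/(1 − γ/r). -/

import Mathlib

open Filter

/-- The time part `D(ω,r)` of the noncommutative black-hole wave operator
acting on a Fourier mode `e^{iωt}` (Proposition 5.3 of the paper), with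
deformation parameter `lam` (the Planck time). -/
noncomputable def Dfun (γ ω r lam : ℝ) : ℝ :=
  (1 / lam ^ 2) *
    (Real.sinh (ω * lam) +
      Real.exp (-(ω * lam)) * (1 - γ / r) *
        (1 - Real.exp (ω * lam) -
          (γ / r) * Real.log ((Real.exp (ω * lam) * r - γ) / (r - γ))))


noncomputable def vf (γ ω r x : ℝ) : ℝ := Real.exp (ω*x) * r - γ
noncomputable def Lf (γ ω r x : ℝ) : ℝ := Real.log (vf γ ω r x) - Real.log (r - γ)
noncomputable def L1f (γ ω r x : ℝ) : ℝ := ω + ω*γ/(vf γ ω r x)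
noncomputable def L2f (γ ω r x : ℝ) : ℝ := -(ω^2*γ)*(vf γ ω r x + γ)/(vf γ ω r x)^2
noncomputable def L3f (γ ω r x : ℝ) : ℝ := ω^3*γ*(vf γ ω r x + γ)*(vf γ ω r x + 2*γ)/(vf γ ω r x)^3

lemma hasDerivAt_vf (γ ω r x : ℝ) : HasDerivAt (vf γ ω r) (ω*(vf γ ω r x + γ)) x := by
  have h1 : HasDerivAt (fun x : ℝ => ω*x) ω x := by
    simpa using (hasDerivAt_id x).const_mul ω
  have h2 := (Real.hasDerivAt_exp (ω*x)).comp x h1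
  have h3 := (h2.mul_const r).sub_const γ
  convert h3 using 1 <;> try rfl
  simp [vf]; ring

lemma hasDerivAt_Lf (γ ω r x : ℝ) (hv : vf γ ω r x ≠ 0) :
    HasDerivAt (Lf γ ω r) (L1f γ ω r x) x := by
  have h := ((hasDerivAt_vf γ ω r x).log hv).sub_const (Real.log (r - γ))
  convert h using 1 <;> try rfl
  simp only [L1f]; field_simp

lemma hasDerivAt_L1f (γ ω r x : ℝ) (hv : vf γ ω r x ≠ 0) :
    HasDerivAt (L1f γ ω r) (L2f γ ω r x) x := by
  have h := (((hasDerivAt_vf γ ω r x).inv hv).const_mul (ω*γ)).const_add ω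
  convert h using 1 <;> try rfl
  simp only [L2f]; field_simp

lemma hasDerivAt_L2f (γ ω r x : ℝ) (hv : vf γ ω r x ≠ 0) :
    HasDerivAt (L2f γ ω r) (L3f γ ω r x) x := by
  have hnum : HasDerivAt (fun x => -(ω^2*γ)*(vf γ ω r x + γ))
      (-(ω^2*γ)*(ω*(vf γ ω r x + γ))) x :=
    ((hasDerivAt_vf γ ω r x).add_const γ).const_mul _
  have hden : HasDerivAt (fun x => (vf γ ω r x)^2)
      (2*(vf γ ω r x)*(ω*(vf γ ω r x + γ))) x := by
    have := (hasDerivAt_vf γ ω r x).pow 2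
    (convert this using 1 <;> try rfl); ring
  have h := hnum.div hden (pow_ne_zero 2 hv)
  convert h using 1 <;> try rfl
  simp only [L3f]; field_simp
  ring

noncomputable def phif (γ ω r x : ℝ) : ℝ := Real.exp (-(ω*x)) * Lf γ ω r x
noncomputable def phi1f (γ ω r x : ℝ) : ℝ :=
  Real.exp (-(ω*x)) * (L1f γ ω r x - ω*Lf γ ω r x)
noncomputable def phi2f (γ ω r x : ℝ) : ℝ :=
  Real.exp (-(ω*x)) * (L2f γ ω r x - 2*ω*L1f γ ω r x + ω^2*Lf γ ω r x)
noncomputable def phi3f (γ ω r x : ℝ) : ℝ :=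
  Real.exp (-(ω*x)) *
    (L3f γ ω r x - 3*ω*L2f γ ω r x + 3*ω^2*L1f γ ω r x - ω^3*Lf γ ω r x)

lemma hasDerivAt_negexp (ω x : ℝ) :
    HasDerivAt (fun x : ℝ => Real.exp (-(ω*x))) (-ω * Real.exp (-(ω*x))) x := by
  have h1 : HasDerivAt (fun x : ℝ => -(ω*x)) (-ω) x := by
    simpa [Pi.neg_def] using ((hasDerivAt_id x).const_mul ω).neg
  have := (Real.hasDerivAt_exp (-(ω*x))).comp x h1
  (convert this using 1 <;> try rfl); ring

lemma hasDerivAt_phif (γ ω r x : ℝ) (hv : vf γ ω r x ≠ 0) :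
    HasDerivAt (phif γ ω r) (phi1f γ ω r x) x := by
  have h := (hasDerivAt_negexp ω x).mul (hasDerivAt_Lf γ ω r x hv)
  convert h using 1 <;> try rfl
  simp [phi1f]; ring

lemma hasDerivAt_phi1f (γ ω r x : ℝ) (hv : vf γ ω r x ≠ 0) :
    HasDerivAt (phi1f γ ω r) (phi2f γ ω r x) x := by
  have h := (hasDerivAt_negexp ω x).mul
    ((hasDerivAt_L1f γ ω r x hv).sub ((hasDerivAt_Lf γ ω r x hv).const_mul ω))
  convert h using 1 <;> try rfl
  simp [phi2f]; ring

lemma hasDerivAt_phi2f (γ ω r x : ℝ) (hv : vf γ ω r x ≠ 0) :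
    HasDerivAt (phi2f γ ω r) (phi3f γ ω r x) x := by
  have h := (hasDerivAt_negexp ω x).mul
    (((hasDerivAt_L2f γ ω r x hv).sub ((hasDerivAt_L1f γ ω r x hv).const_mul (2*ω))).add
      ((hasDerivAt_Lf γ ω r x hv).const_mul (ω^2)))
  convert h using 1 <;> try rfl
  simp [phi3f]; ring

noncomputable def Gf0 (γ ω r x : ℝ) : ℝ :=
  (2*(1-γ/r)/ω^2) * (Real.sinh (ω*x) + (1-γ/r)*(Real.exp (-(ω*x)) - 1)
    - (γ/r)*(1-γ/r)*phif γ ω r x) - x^2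
noncomputable def Gf1 (γ ω r x : ℝ) : ℝ :=
  (2*(1-γ/r)/ω^2) * (ω*Real.cosh (ω*x) - (1-γ/r)*ω*Real.exp (-(ω*x))
    - (γ/r)*(1-γ/r)*phi1f γ ω r x) - 2*x
noncomputable def Gf2 (γ ω r x : ℝ) : ℝ :=
  (2*(1-γ/r)/ω^2) * (ω^2*Real.sinh (ω*x) + (1-γ/r)*ω^2*Real.exp (-(ω*x))
    - (γ/r)*(1-γ/r)*phi2f γ ω r x) - 2
noncomputable def Gf3 (γ ω r x : ℝ) : ℝ :=
  (2*(1-γ/r)/ω^2) * (ω^3*Real.cosh (ω*x) - (1-γ/r)*ω^3*Real.exp (-(ω*x))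
    - (γ/r)*(1-γ/r)*phi3f γ ω r x)

lemma hasDerivAt_sinh' (ω x : ℝ) :
    HasDerivAt (fun x : ℝ => Real.sinh (ω*x)) (ω*Real.cosh (ω*x)) x := by
  have h1 : HasDerivAt (fun x : ℝ => ω*x) ω x := by
    simpa using (hasDerivAt_id x).const_mul ω
  have := (Real.hasDerivAt_sinh (ω*x)).comp x h1
  (convert this using 1 <;> try rfl); ring

lemma hasDerivAt_cosh' (ω x : ℝ) :
    HasDerivAt (fun x : ℝ => Real.cosh (ω*x)) (ω*Real.sinh (ω*x)) x := by
  have h1 : HasDerivAt (fun x : ℝ => ω*x) ω x := by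
    simpa using (hasDerivAt_id x).const_mul ω
  have := (Real.hasDerivAt_cosh (ω*x)).comp x h1
  (convert this using 1 <;> try rfl); ring

lemma hasDerivAt_Gf0 (γ ω r x : ℝ) (hv : vf γ ω r x ≠ 0) :
    HasDerivAt (Gf0 γ ω r) (Gf1 γ ω r x) x := by
  have h := ((((hasDerivAt_sinh' ω x).add
      (((hasDerivAt_negexp ω x).sub_const 1).const_mul (1-γ/r))).sub
      ((hasDerivAt_phif γ ω r x hv).const_mul ((γ/r)*(1-γ/r)))).const_mul
      (2*(1-γ/r)/ω^2)).sub (hasDerivAt_pow 2 x)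
  convert h using 1 <;> try rfl
  simp only [Gf1]; push_cast; ring

lemma hasDerivAt_Gf1 (γ ω r x : ℝ) (hv : vf γ ω r x ≠ 0) :
    HasDerivAt (Gf1 γ ω r) (Gf2 γ ω r x) x := by
  have h := ((((hasDerivAt_cosh' ω x).const_mul ω).sub
      ((hasDerivAt_negexp ω x).const_mul ((1-γ/r)*ω))).sub
      ((hasDerivAt_phi1f γ ω r x hv).const_mul ((γ/r)*(1-γ/r)))).const_mul
      (2*(1-γ/r)/ω^2) |>.sub ((hasDerivAt_id x).const_mul 2)
  convert h using 1 <;> try rfl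
  simp only [Gf2]; ring

lemma hasDerivAt_Gf2 (γ ω r x : ℝ) (hv : vf γ ω r x ≠ 0) :
    HasDerivAt (Gf2 γ ω r) (Gf3 γ ω r x) x := by
  have h := ((((hasDerivAt_sinh' ω x).const_mul (ω^2)).add
      ((hasDerivAt_negexp ω x).const_mul ((1-γ/r)*ω^2))).sub
      ((hasDerivAt_phi2f γ ω r x hv).const_mul ((γ/r)*(1-γ/r)))).const_mul
      (2*(1-γ/r)/ω^2) |>.sub_const 2
  convert h using 1 <;> try rfl
  simp only [Gf3]; ring


lemma key (γ ω r : ℝ) (hγ : 0 < γ) (hω : ω ≠ 0) (hr : γ < r) :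
    Tendsto (fun x => Gf0 γ ω r x / x^3) (nhdsWithin 0 (Set.Ioi 0))
      (nhds (-(2/3)*ω*(γ/r)/(1-γ/r))) := by
  have hr0 : (0:ℝ) < r := hγ.trans hr
  have hrg : (0:ℝ) < r - γ := by linarith
  have hrne : r ≠ 0 := hr0.ne'
  have hrgne : r - γ ≠ 0 := hrg.ne'
  have hv0 : vf γ ω r 0 = r - γ := by simp [vf]
  have hv0pos : 0 < vf γ ω r 0 := by rw [hv0]; exact hrg
  -- continuity of vf
  have hcv : ContinuousAt (vf γ ω r) 0 := by
    unfold vf; fun_prop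
  have hvt : Tendsto (vf γ ω r) (nhds 0) (nhds (r - γ)) := by
    rw [← hv0]; exact hcv
  have hev : ∀ᶠ x in nhds (0:ℝ), 0 < vf γ ω r x :=
    hvt.eventually (eventually_gt_nhds hrg)
  have hevW : ∀ᶠ x in nhdsWithin (0:ℝ) (Set.Ioi 0), 0 < vf γ ω r x :=
    hev.filter_mono nhdsWithin_le_nhds
  -- values at 0
  have g0 : Gf0 γ ω r 0 = 0 := by
    simp [Gf0, phif, Lf, vf]
  have g1 : Gf1 γ ω r 0 = 0 := by
    simp only [Gf1, phi1f, L1f, Lf, vf, mul_zero, Real.exp_zero, one_mul, neg_zero,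
      Real.cosh_zero, sub_self]
    field_simp
    ring
  have g2 : Gf2 γ ω r 0 = 0 := by
    simp only [Gf2, phi2f, L2f, L1f, Lf, vf, mul_zero, Real.exp_zero, one_mul, neg_zero,
      Real.sinh_zero, sub_self]
    field_simp
    ring
  have g3 : Gf3 γ ω r 0 = 6 * (-(2/3)*ω*(γ/r)/(1-γ/r)) := by
    simp only [Gf3, phi3f, L3f, L2f, L1f, Lf, vf, mul_zero, Real.exp_zero, one_mul, neg_zero,
      Real.cosh_zero, sub_self]
    field_simp
    ring
  -- continuity of Gf3 at 0
  have hvne : vf γ ω r 0 ≠ 0 := hv0pos.ne'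
  have hcL : ContinuousAt (Lf γ ω r) 0 := (hcv.log hvne).sub continuousAt_const
  have hcL1 : ContinuousAt (L1f γ ω r) 0 :=
    continuousAt_const.add (continuousAt_const.div hcv hvne)
  have hcL2 : ContinuousAt (L2f γ ω r) 0 :=
    (continuousAt_const.mul (hcv.add continuousAt_const)).div (hcv.pow 2)
      (pow_ne_zero 2 hvne)
  have hcL3 : ContinuousAt (L3f γ ω r) 0 :=
    ((continuousAt_const.mul (hcv.add continuousAt_const)).mul
      (hcv.add continuousAt_const)).div (hcv.pow 3) (pow_ne_zero 3 hvne)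
  have hce : ContinuousAt (fun x : ℝ => Real.exp (-(ω*x))) 0 := by fun_prop
  have hcphi3 : ContinuousAt (phi3f γ ω r) 0 :=
    hce.mul (((hcL3.sub (continuousAt_const.mul hcL2)).add
      (continuousAt_const.mul hcL1)).sub (continuousAt_const.mul hcL))
  have hccosh : ContinuousAt (fun x : ℝ => Real.cosh (ω*x)) 0 := by fun_prop
  have hcG3 : ContinuousAt (Gf3 γ ω r) 0 :=
    continuousAt_const.mul (((continuousAt_const.mul hccosh).sub
      (continuousAt_const.mul hce)).sub (continuousAt_const.mul hcphi3))
  -- limit of Gf3 / 6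
  have hdiv3 : Tendsto (fun x => Gf3 γ ω r x / 6) (nhdsWithin 0 (Set.Ioi 0))
      (nhds (-(2/3)*ω*(γ/r)/(1-γ/r))) := by
    have h : Tendsto (Gf3 γ ω r) (nhdsWithin (0:ℝ) (Set.Ioi 0)) (nhds (Gf3 γ ω r 0)) :=
      hcG3.tendsto.mono_left nhdsWithin_le_nhds
    have h2 := h.div_const 6
    rw [g3] at h2
    simpa using h2
  -- L'Hopital step 3 : Gf2 / (6x)
  have hdiv2 : Tendsto (fun x => Gf2 γ ω r x / (6*x)) (nhdsWithin 0 (Set.Ioi 0))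
      (nhds (-(2/3)*ω*(γ/r)/(1-γ/r))) := by
    apply HasDerivAt.lhopital_zero_nhdsGT
      (f' := Gf3 γ ω r) (g' := fun _ => 6)
    · exact hevW.mono fun x hx => hasDerivAt_Gf2 γ ω r x hx.ne'
    · exact Eventually.of_forall fun x => by
        simpa using (hasDerivAt_id x).const_mul 6
    · exact Eventually.of_forall fun x => by norm_num
    · have h20 := hasDerivAt_Gf2 γ ω r 0 hvne
      have h : Tendsto (Gf2 γ ω r) (nhdsWithin (0:ℝ) (Set.Ioi 0)) (nhds (Gf2 γ ω r 0)) :=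
        h20.continuousAt.tendsto.mono_left nhdsWithin_le_nhds
      rwa [g2] at h
    · have : Tendsto (fun x : ℝ => 6*x) (nhds 0) (nhds 0) := by
        simpa [Pi.mul_def] using (continuous_const.mul continuous_id).tendsto (0:ℝ)
      exact this.mono_left nhdsWithin_le_nhds
    · exact hdiv3
  -- L'Hopital step 2 : Gf1 / (3x²)
  have hdiv1 : Tendsto (fun x => Gf1 γ ω r x / (3*x^2)) (nhdsWithin 0 (Set.Ioi 0))
      (nhds (-(2/3)*ω*(γ/r)/(1-γ/r))) := by
    apply HasDerivAt.lhopital_zero_nhdsGT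
      (f' := Gf2 γ ω r) (g' := fun x => 6*x)
    · exact hevW.mono fun x hx => hasDerivAt_Gf1 γ ω r x hx.ne'
    · exact Eventually.of_forall fun x =>
        ((hasDerivAt_pow 2 x).const_mul 3).congr_deriv (by push_cast; ring)
    · exact eventually_mem_nhdsWithin.mono fun x (hx : x ∈ Set.Ioi 0) => by
        have : (0:ℝ) < x := hx
        positivity
    · have h10 := hasDerivAt_Gf1 γ ω r 0 hvne
      have h : Tendsto (Gf1 γ ω r) (nhdsWithin (0:ℝ) (Set.Ioi 0)) (nhds (Gf1 γ ω r 0)) :=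
        h10.continuousAt.tendsto.mono_left nhdsWithin_le_nhds
      rwa [g1] at h
    · have : Tendsto (fun x : ℝ => 3*x^2) (nhds 0) (nhds 0) := by
        have : Continuous (fun x : ℝ => 3*x^2) := by fun_prop
        simpa using this.tendsto (0:ℝ)
      exact this.mono_left nhdsWithin_le_nhds
    · exact hdiv2
  -- L'Hopital step 1 : Gf0 / x³
  apply HasDerivAt.lhopital_zero_nhdsGT
    (f' := Gf1 γ ω r) (g' := fun x => 3*x^2)
  · exact hevW.mono fun x hx => hasDerivAt_Gf0 γ ω r x hx.ne'
  · exact Eventually.of_forall fun x =>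
      (hasDerivAt_pow 3 x).congr_deriv (by push_cast; ring)
  · exact eventually_mem_nhdsWithin.mono fun x (hx : x ∈ Set.Ioi 0) => by
      have : (0:ℝ) < x := hx
      positivity
  · have h00 := hasDerivAt_Gf0 γ ω r 0 hvne
    have h : Tendsto (Gf0 γ ω r) (nhdsWithin (0:ℝ) (Set.Ioi 0)) (nhds (Gf0 γ ω r 0)) :=
      h00.continuousAt.tendsto.mono_left nhdsWithin_le_nhds
    rwa [g0] at h
  · have : Tendsto (fun x : ℝ => x^3) (nhds 0) (nhds 0) := by
      have : Continuous (fun x : ℝ => x^3) := by fun_prop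
      simpa using this.tendsto (0:ℝ)
    exact this.mono_left nhdsWithin_le_nhds
  · exact hdiv1

/- The first-order expansion of Section 5.2 item (a):
2D(ω,r,λ) = (ω²/(1 − γ/r))·(1 − (2/3)·ωλγ/(r(1 − γ/r)) + O((ωλ)²)), i.e.
(2D·(1 − γ/r)/ω² − 1)/λ → −(2/3)·ω·(γ/r)/(1 − γ/r) as λ → 0⁺. -/

theorem Dfun_first_order_redshift_expansion (γ ω r : ℝ) (hγ : 0 < γ)
    (hω : ω ≠ 0) (hr : γ < r) :
    Tendsto
      (fun lam => (2 * Dfun γ ω r lam * (1 - γ / r) / ω ^ 2 - 1) / lam)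
      (nhdsWithin 0 (Set.Ioi 0))
      (nhds (-(2 / 3) * ω * (γ / r) / (1 - γ / r))) := by
  have hr0 : (0:ℝ) < r := hγ.trans hr
  have hrg : (0:ℝ) < r - γ := by linarith
  have hv0 : vf γ ω r 0 = r - γ := by simp [vf]
  have hcv : ContinuousAt (vf γ ω r) 0 := by unfold vf; fun_prop
  have hvt : Tendsto (vf γ ω r) (nhds 0) (nhds (r - γ)) := by
    rw [← hv0]; exact hcv
  have hev : ∀ᶠ x in nhds (0:ℝ), 0 < vf γ ω r x :=
    hvt.eventually (eventually_gt_nhds hrg)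
  have hevW : ∀ᶠ x in nhdsWithin (0:ℝ) (Set.Ioi 0), 0 < vf γ ω r x :=
    hev.filter_mono nhdsWithin_le_nhds
  have heq : (fun x => Gf0 γ ω r x / x^3) =ᶠ[nhdsWithin (0:ℝ) (Set.Ioi 0)]
      (fun lam => (2 * Dfun γ ω r lam * (1 - γ / r) / ω ^ 2 - 1) / lam) := by
    filter_upwards [hevW, eventually_mem_nhdsWithin] with x hv hx
    have hx0 : x ≠ 0 := ne_of_gt hx
    unfold Gf0 phif Lf Dfun
    rw [Real.log_div (by simpa [vf] using hv.ne') hrg.ne']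
    unfold vf at *
    rw [Real.exp_neg]
    field_simp
    ring
  exact (key γ ω r hγ hω hr).congr' heq
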